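/- The group E_5(ℚ) of rational points of the elliptic curve y² = x³ − 25x is infinite; equivalently, E_5(ℚ) contains a point of infinite order. -/

import Mathlib

/-- The elliptic curve `E_5 : y² = x³ − 25x` as an affine Weierstrass curve over `ℚ`. -/
def E5 : WeierstrassCurve.Affine ℚ :=
  { a₁ := 0, a₂ := 0, a₃ := 0, a₄ := -25, a₆ := 0 }

open WeierstrassCurve.Affine

local notation "v₂" => padicValRat 2

lemma v2_odd_nat {n : ℕ} (h : ¬ 2 ∣ n) : v₂ (n : ℚ) = 0 := by
  rw [padicValRat.of_nat, padicValNat.eq_zero_of_not_dvd h, Nat.cast_zero]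

lemma v2_ne_zero {q : ℚ} (h : v₂ q ≠ 0) : q ≠ 0 := by
  intro h0; rw [h0, padicValRat.zero] at h; exact h rfl

/-- The key valuation computation: if `(x, y)` is a point on `E5` with `v₂ x < 0`, then
the doubled point has `x`-coordinate of valuation `v₂ x - 2`. -/
lemma v2_step {x y : ℚ} (heq : E5.Equation x y) (hx : v₂ x < 0) :
    y ≠ E5.negY x y ∧ v₂ (E5.addX x x (E5.slope x x y y)) = v₂ x - 2 := by
  have heq' : y ^ 2 = x ^ 3 - 25 * x := by
    have := (E5.equation_iff x y).mp heq
    simp only [E5] at this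
    linarith
  have hx0 : x ≠ 0 := v2_ne_zero (by omega)
  have h25 : v₂ (25 : ℚ) = 0 := by
    rw [show (25 : ℚ) = ((25 : ℕ) : ℚ) by norm_num]; exact v2_odd_nat (by norm_num)
  have h3 : v₂ (3 : ℚ) = 0 := by
    rw [show (3 : ℚ) = ((3 : ℕ) : ℚ) by norm_num]; exact v2_odd_nat (by norm_num)
  have h2 : v₂ (2 : ℚ) = 1 := by
    rw [show (2 : ℚ) = ((2 : ℕ) : ℚ) by norm_num]
    exact_mod_cast padicValRat.self (by norm_num : 1 < 2)
  -- y ≠ 0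
  have hy0 : y ≠ 0 := by
    intro h0
    rw [h0] at heq'
    have hx2 : x ^ 2 = 25 := by
      have : x * (x ^ 2 - 25) = 0 := by linarith [heq']
      rcases mul_eq_zero.mp this with h | h
      · exact absurd h hx0
      · linarith
    have : v₂ (x ^ 2) = 0 := by rw [hx2, h25]
    rw [padicValRat.pow x] at this
    omega
  -- v₂ (x ^ 3 - 25 * x) = 3 * v₂ x
  have hcube : v₂ (x ^ 3 - 25 * x) = 3 * v₂ x := by
    have h1 : v₂ (x ^ 3) = 3 * v₂ x := padicValRat.pow x
    have h2' : v₂ (-(25 * x)) = v₂ x := by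
      rw [padicValRat.neg, padicValRat.mul (by norm_num) hx0, h25, zero_add]
    have hne : x ^ 3 + -(25 * x) ≠ 0 := by
      rw [show x ^ 3 + -(25 * x) = x ^ 3 - 25 * x by ring, ← heq']
      exact pow_ne_zero 2 hy0
    rw [show x ^ 3 - 25 * x = x ^ 3 + -(25 * x) by ring,
      padicValRat.add_eq_of_lt hne (pow_ne_zero 3 hx0)
        (neg_ne_zero.mpr (mul_ne_zero (by norm_num) hx0)) (by rw [h1, h2']; omega), h1]
  have hvy : 2 * v₂ y = 3 * v₂ x := by
    have h' : v₂ (y ^ 2) = 2 * v₂ y := by rw [padicValRat.pow y]; push_cast; ring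
    rw [heq', hcube] at h'
    omega
  -- negY
  have hnegY : E5.negY x y = -y := by simp [E5, WeierstrassCurve.Affine.negY]
  have hyne : y ≠ E5.negY x y := by rw [hnegY]; intro h; apply hy0; linarith
  refine ⟨hyne, ?_⟩
  -- slope
  have hslope : E5.slope x x y y = (3 * x ^ 2 - 25) / (2 * y) := by
    rw [slope_of_Y_ne rfl hyne, hnegY]
    simp only [E5]
    ring_nf
  -- v₂ (3 x² - 25) = 2 v₂ x
  have hnum : v₂ (3 * x ^ 2 - 25) = 2 * v₂ x := by
    have h1 : v₂ (3 * x ^ 2) = 2 * v₂ x := by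
      rw [padicValRat.mul (by norm_num) (pow_ne_zero 2 hx0), h3, padicValRat.pow x, zero_add]
      push_cast; ring
    have hne : 3 * x ^ 2 + -25 ≠ 0 := by
      intro h
      have : 3 * x ^ 2 = 25 := by linarith
      rw [this, h25] at h1; omega
    rw [show 3 * x ^ 2 - 25 = 3 * x ^ 2 + -(25 : ℚ) by ring,
      padicValRat.add_eq_of_lt hne (by
        intro h; rw [h, padicValRat.zero] at h1; omega)
        (by norm_num) (by rw [h1, padicValRat.neg, h25]; omega), h1]
  have hLne : (3 * x ^ 2 - 25) / (2 * y) ≠ 0 := by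
    apply div_ne_zero
    · exact v2_ne_zero (by rw [hnum]; omega)
    · exact mul_ne_zero (by norm_num) hy0
  have hvL : 2 * v₂ (E5.slope x x y y) = v₂ x - 2 := by
    rw [hslope, padicValRat.div (v2_ne_zero (by rw [hnum]; omega)) (mul_ne_zero (by norm_num) hy0),
      padicValRat.mul (by norm_num) hy0, h2, hnum]
    omega
  -- addX
  have haddX : E5.addX x x (E5.slope x x y y) =
      E5.slope x x y y ^ 2 + -(2 * x) := by
    simp only [E5, WeierstrassCurve.Affine.addX]
    ring
  have hsq : v₂ (E5.slope x x y y ^ 2) = v₂ x - 2 := by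
    rw [padicValRat.pow _]
    push_cast
    omega
  have h2x : v₂ (-(2 * x)) = 1 + v₂ x := by
    rw [padicValRat.neg, padicValRat.mul (by norm_num) hx0, h2]
  have hLsq0 : E5.slope x x y y ^ 2 ≠ 0 := v2_ne_zero (by rw [hsq]; omega)
  have hne : E5.slope x x y y ^ 2 + -(2 * x) ≠ 0 := by
    intro h
    have : E5.slope x x y y ^ 2 = 2 * x := by linarith
    rw [this] at hsq
    rw [show (2 : ℚ) * x = -(-(2 * x)) by ring, padicValRat.neg] at hsq
    omega
  rw [haddX, padicValRat.add_eq_of_lt hne hLsq0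
    (neg_ne_zero.mpr (mul_ne_zero (by norm_num) hx0)) (by rw [hsq, h2x]; omega), hsq]

/-- The `x`-coordinate of a point, with junk value `0` at infinity. -/
noncomputable def xc : E5.Point → ℚ
  | .zero => 0
  | @WeierstrassCurve.Affine.Point.some _ _ _ x _ _ => x

lemma xc_some {x y : ℚ} (h : E5.Nonsingular x y) : xc (Point.some _ _ h) = x := rfl

lemma step (P : E5.Point) (hP : P ≠ 0) (hx : v₂ (xc P) < 0) :
    (P + P) ≠ 0 ∧ v₂ (xc (P + P)) = v₂ (xc P) - 2 := by
  induction P with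
  | zero => exact absurd rfl hP
  | @some x y h =>
    rw [xc_some] at hx
    obtain ⟨hyne, hval⟩ := v2_step h.1 hx
    rw [Point.add_self_of_Y_ne hyne]
    exact ⟨Point.some_ne_zero _, by rw [xc_some, xc_some, hval]⟩

lemma E5_nonsingular_Q0 : E5.Nonsingular (1681/144) (-62279/1728) := by
  rw [nonsingular_iff]
  constructor
  · rw [equation_iff]
    simp only [E5]
    norm_num
  · right
    simp only [E5]
    norm_num

/-- The initial point `Q₀ = (1681/144, −62279/1728) ∈ E₅(ℚ)`. -/
noncomputable def Q0 : E5.Point := Point.some _ _ E5_nonsingular_Q0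

lemma v2_xc_Q0 : v₂ (xc Q0) = -4 := by
  rw [Q0, xc_some]
  have h144 : (144 : ℚ) = ((9 : ℕ) : ℚ) * ((2 : ℕ) : ℚ) ^ 4 := by norm_num
  have : v₂ ((1681 : ℚ) / 144) = v₂ (1681 : ℚ) - v₂ (144 : ℚ) :=
    padicValRat.div (by norm_num) (by norm_num)
  rw [this, show (1681 : ℚ) = ((1681 : ℕ) : ℚ) by norm_num, v2_odd_nat (by norm_num), h144,
    padicValRat.mul (by norm_num) (by norm_num), v2_odd_nat (by norm_num),
    padicValRat.pow _, padicValRat.self (by norm_num : 1 < 2)]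
  norm_num

/-- The sequence of doublings of `Q₀`. -/
noncomputable def f : ℕ → E5.Point := fun k => 2 ^ k • Q0

lemma f_zero : f 0 = Q0 := by simp [f]

lemma f_succ (k : ℕ) : f (k + 1) = f k + f k := by
  rw [f, f, pow_succ, mul_comm, two_mul, add_nsmul]

lemma f_spec (k : ℕ) : f k ≠ 0 ∧ v₂ (xc (f k)) = -4 - 2 * (k : ℤ) := by
  induction k with
  | zero =>
    rw [f_zero]
    exact ⟨by rw [Q0]; exact Point.some_ne_zero _, by rw [v2_xc_Q0]; norm_num⟩
  | succ k ih =>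
    obtain ⟨h0, hv⟩ := ih
    have := step (f k) h0 (by rw [hv]; omega)
    rw [← f_succ] at this
    refine ⟨this.1, ?_⟩
    rw [this.2, hv]
    push_cast
    ring

lemma f_injective : Function.Injective f := by
  intro k l h
  have hk := (f_spec k).2
  have hl := (f_spec l).2
  rw [h, hl] at hk
  omega

/-- The group `E_5(ℚ)` of rational points of `y² = x³ − 25x` is infinite; equivalently it
contains a point of infinite order. -/
theorem E5_points_infinite :
    Infinite E5.Point ∧ ∃ P : E5.Point, ¬ IsOfFinAddOrder P := by
  refine ⟨Infinite.of_injective f f_injective, Q0, fun h => ?_⟩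
  have hfin : (AddSubmonoid.multiples Q0 : Set E5.Point).Finite := h.finite_multiples
  have hsub : Set.range f ⊆ (AddSubmonoid.multiples Q0 : Set E5.Point) := by
    rintro _ ⟨k, rfl⟩
    exact ⟨2 ^ k, rfl⟩
  exact (Set.infinite_range_of_injective f_injective) (hfin.subset hsub)
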